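/- Let ℓ be a prime, V an 𝔽_ℓ-vector space, e : V × V → μ_ℓ a bilinear pairing, α, β ∈ V with ζ := e(α,β) a primitive ℓ-th root of unity. Let U ⊆ End(V) be an additive subgroup such that e(α, μ(β)) = 1 for all μ ∈ U, and let U₁ be the subgroup generated by the identity and U. Then the map T : V × V × (U₁/U) → μ_ℓ given by T(xα, yβ, z·id + U) = e(xα, (z·id + μ)(yβ)) for any μ ∈ U is well-defined and equals ζ^{xyz}; in particular T is trilinear (multiplicative in each of x, y, z). -/
import Mathlib

section aux

variable {V M : Type*} [AddCommGroup V] [CommGroup M]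

private def leftHom (e : V → V → M)
    (hl : ∀ u v w : V, e (u + v) w = e u w * e v w) (w : V) : V →+ Additive M where
  toFun u := Additive.ofMul (e u w)
  map_zero' := by
    have h := hl 0 0 w
    simp only [add_zero] at h
    simpa using left_eq_mul.mp h
  map_add' u v := by simp [hl u v w]

private def rightHom (e : V → V → M)
    (hr : ∀ u v w : V, e u (v + w) = e u v * e u w) (u : V) : V →+ Additive M where
  toFun v := Additive.ofMul (e u v)
  map_zero' := by
    have h := hr u 0 0
    simp only [add_zero] at h
    simpa using left_eq_mul.mp h
  map_add' v w := by simp [hr u v w]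

private theorem left_zsmul (e : V → V → M)
    (hl : ∀ u v w : V, e (u + v) w = e u w * e v w) (x : ℤ) (u w : V) :
    e (x • u) w = (e u w) ^ x := by
  have := map_zsmul (leftHom e hl w) x u
  simpa [leftHom, ← ofMul_zpow] using this

private theorem right_zsmul (e : V → V → M)
    (hr : ∀ u v w : V, e u (v + w) = e u v * e u w) (x : ℤ) (u w : V) :
    e u (x • w) = (e u w) ^ x := by
  have := map_zsmul (rightHom e hr u) x w
  simpa [rightHom, ← ofMul_zpow] using this

end aux

/-- the core trilinear map. If `e(α, μ(β)) = 1` for all `μ ∈ U`, then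
`T(x•α, y•β, z·id + U) = e(x•α, (z·id + μ)(y•β))` is independent of the representative
`z·id + μ` (`μ ∈ U`) and equals `ζ^{xyz}` where `ζ = e(α, β)`; in particular it is
trilinear. -/
theorem stmt6 {ℓ : ℕ} [Fact ℓ.Prime] {V M : Type*} [AddCommGroup V]
    [Module (ZMod ℓ) V] [CommGroup M]
    (e : V → V → M)
    (hl : ∀ u v w : V, e (u + v) w = e u w * e v w)
    (hr : ∀ u v w : V, e u (v + w) = e u v * e u w)
    (α β : V) (hζ : orderOf (e α β) = ℓ)
    (U : AddSubgroup (Module.End (ZMod ℓ) V))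
    (hU : ∀ μ ∈ U, e α (μ β) = 1) :
    ∀ (x y z : ℤ) (μ : Module.End (ZMod ℓ) V), μ ∈ U →
      e (x • α) ((z • (1 : Module.End (ZMod ℓ) V) + μ) (y • β)) =
        (e α β) ^ (x * y * z) := by
  intro x y z μ hμ
  have happ : (z • (1 : Module.End (ZMod ℓ) V) + μ) (y • β)
      = z • (y • β) + y • (μ β) := by
    simp [LinearMap.add_apply, map_zsmul, smul_comm y z]
  rw [happ, hr, right_zsmul e hr, right_zsmul e hr, left_zsmul e hl,
    left_zsmul e hl, right_zsmul e hr, hU μ hμ]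
  simp only [one_zpow, mul_one]
  rw [← zpow_mul, ← zpow_mul]
  congr 1
  ring
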